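/- Let p be a prime and S^G = F_p[f_1, f_2] a polynomial ring in two variables with deg f_1 = p, deg f_2 = e. For h_0 = f_2^{1+e^{-1}(p^m−1)}, h_1 = Σ_{k=0}^{m−1} f_2^{1+e^{-1}(p^m−p^{m−k})} f_1^{p^{m−k−1}}, h_2 = f_1^{2p^{m−1}}, the syzygy module of (h_0, h_1, h_2) over S^G is free of rank 2; consequently the ideal I = (h_0, h_1, h_2) has graded free resolution 0 → S^G[−(2p^m+e)] ⊕ S^G[−(2p^m+e−1)] → S^G[−(p^m+e−1)] ⊕ S^G[−(p^m+e)] ⊕ S^G[−2p^m] → I → 0. -/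

import Mathlib

set_option maxHeartbeats 1600000

open MvPolynomial

private lemma aux_e_dvd {p e : ℕ} (hp : 1 ≤ p) (he : e ∣ p - 1) {a b : ℕ} (hba : b ≤ a) :
    e ∣ p ^ a - p ^ b := by
  have h1 : p ^ b ≡ 1 [MOD e] := by
    have : p ≡ 1 [MOD e] := ((Nat.modEq_iff_dvd' hp).mpr he).symm
    simpa using this.pow b
  have h2 : p ^ a ≡ 1 [MOD e] := by
    have : p ≡ 1 [MOD e] := ((Nat.modEq_iff_dvd' hp).mpr he).symm
    simpa using this.pow a
  exact (Nat.modEq_iff_dvd' (Nat.pow_le_pow_right hp hba)).mp (h1.trans h2.symm)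

/-- `S^G = F_p[f_1,f_2]` as an abstract polynomial ring in the two variables
`f_1 = X 0`, `f_2 = X 1`, weighted-graded by `deg f_1 = p`, `deg f_2 = e`.
The syzygy module of `(h_0, h_1, h_2)` is free of rank `2`, with a basis of weighted
homogeneous syzygies of degrees `2p^m+e` and `2p^m+e−1`; together with the surjection
`(a,b,c) ↦ a h_0 + b h_1 + c h_2` onto `I = (h_0,h_1,h_2)`, this is the graded free
resolution `0 → S^G[−(2p^m+e)] ⊕ S^G[−(2p^m+e−1)] →
S^G[−(p^m+e−1)] ⊕ S^G[−(p^m+e)] ⊕ S^G[−2p^m] → I → 0`. -/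
theorem stmt_15 (p m e : ℕ) [Fact p.Prime] (hm : 1 ≤ m) (he0 : 0 < e) (he : e ∣ p - 1) :
    LinearMap.range (Fintype.linearCombination (MvPolynomial (Fin 2) (ZMod p))
        ![(X 1 : MvPolynomial (Fin 2) (ZMod p)) ^ (1 + (p ^ m - 1) / e),
          ∑ k ∈ Finset.range m,
            (X 1 : MvPolynomial (Fin 2) (ZMod p)) ^ (1 + (p ^ m - p ^ (m - k)) / e)
              * X 0 ^ p ^ (m - k - 1),
          (X 0 : MvPolynomial (Fin 2) (ZMod p)) ^ (2 * p ^ (m - 1))])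
      = Ideal.span {(X 1 : MvPolynomial (Fin 2) (ZMod p)) ^ (1 + (p ^ m - 1) / e),
          ∑ k ∈ Finset.range m,
            (X 1 : MvPolynomial (Fin 2) (ZMod p)) ^ (1 + (p ^ m - p ^ (m - k)) / e)
              * X 0 ^ p ^ (m - k - 1),
          (X 0 : MvPolynomial (Fin 2) (ZMod p)) ^ (2 * p ^ (m - 1))}
    ∧ ∃ b : Module.Basis (Fin 2) (MvPolynomial (Fin 2) (ZMod p))
        ↥(LinearMap.ker (Fintype.linearCombination (MvPolynomial (Fin 2) (ZMod p))
          ![(X 1 : MvPolynomial (Fin 2) (ZMod p)) ^ (1 + (p ^ m - 1) / e),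
            ∑ k ∈ Finset.range m,
              (X 1 : MvPolynomial (Fin 2) (ZMod p)) ^ (1 + (p ^ m - p ^ (m - k)) / e)
                * X 0 ^ p ^ (m - k - 1),
            (X 0 : MvPolynomial (Fin 2) (ZMod p)) ^ (2 * p ^ (m - 1))])),
        ∀ j : Fin 2, ∀ i : Fin 3,
          IsWeightedHomogeneous ![p, e] ((b j).1 i)
            (![2 * p ^ m + e, 2 * p ^ m + e - 1] j - ![p ^ m + e - 1, p ^ m + e, 2 * p ^ m] i) := by
  classical
  have hp2 : 2 ≤ p := (Fact.out : p.Prime).two_le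
  obtain ⟨m', rfl⟩ : ∃ m', m = m' + 1 := ⟨m - 1, by omega⟩
  -- abstract the three generators from the goal
  set h0 : MvPolynomial (Fin 2) (ZMod p) :=
    (X 1 : MvPolynomial (Fin 2) (ZMod p)) ^ (1 + (p ^ (m' + 1) - 1) / e) with hh0def
  set h1 : MvPolynomial (Fin 2) (ZMod p) := ∑ k ∈ Finset.range (m' + 1),
      (X 1 : MvPolynomial (Fin 2) (ZMod p)) ^ (1 + (p ^ (m' + 1) - p ^ (m' + 1 - k)) / e)
        * X 0 ^ p ^ (m' + 1 - k - 1) with hh1def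
  set h2 : MvPolynomial (Fin 2) (ZMod p) :=
    (X 0 : MvPolynomial (Fin 2) (ZMod p)) ^ (2 * p ^ (m' + 1 - 1)) with hh2def
  clear_value h0 h1 h2
  -- numerical abbreviations (kept opaque)
  obtain ⟨q, hqdef⟩ : ∃ q, q = p ^ m' := ⟨_, rfl⟩
  obtain ⟨Q, hQdef⟩ : ∃ Q, Q = p ^ (m' + 1) := ⟨_, rfl⟩
  obtain ⟨N, hNdef⟩ : ∃ N, N = (Q - 1) / e := ⟨_, rfl⟩
  obtain ⟨c, hcdef⟩ : ∃ c, c = (Q - q) / e := ⟨_, rfl⟩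
  have hq1 : 1 ≤ q := hqdef ▸ Nat.one_le_pow _ _ (by omega)
  have hQq : Q = q * p := by rw [hqdef, hQdef, pow_succ]
  have hqQ : q ≤ Q := by nlinarith
  have h2q : 2 * q ≤ Q := by nlinarith
  have he1 : 1 ≤ e := he0
  have heP : e ≤ p - 1 := Nat.le_of_dvd (by omega) he
  have heN : e * N = Q - 1 := by
    rw [hNdef, hQdef]
    exact Nat.mul_div_cancel' (by simpa using aux_e_dvd (by omega) he (Nat.zero_le (m' + 1)))
  have hec : e * c = Q - q := by
    rw [hcdef, hQdef, hqdef]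
    exact Nat.mul_div_cancel' (aux_e_dvd (by omega) he (by omega))
  have hc1 : 1 ≤ c := by
    rcases Nat.eq_zero_or_pos c with h | h
    · exfalso
      rw [h, mul_zero] at hec
      have h5 : p - 1 ≤ q * (p - 1) := Nat.le_mul_of_pos_left _ hq1
      have hqp : q * (p - 1) = Q - q := by rw [Nat.mul_sub, mul_one, ← hQq]
      omega
    · exact h
  have hNc : N ≤ 2 * c := by
    have h1' : e * N ≤ e * (2 * c) := by
      have h5 : e * (2 * c) = 2 * (e * c) := by ring
      omega
    exact Nat.le_of_mul_le_mul_left h1' he0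
  -- auxiliary polynomials
  obtain ⟨g, hgdef⟩ : ∃ g : MvPolynomial (Fin 2) (ZMod p), g = ∑ k ∈ Finset.range (m' + 1),
      (X 1 : MvPolynomial (Fin 2) (ZMod p)) ^ ((p ^ (m' + 1) - p ^ (m' + 1 - k)) / e)
        * X 0 ^ p ^ (m' + 1 - k - 1) := ⟨_, rfl⟩
  obtain ⟨s, hsdef⟩ : ∃ s : MvPolynomial (Fin 2) (ZMod p), s = ∑ k ∈ Finset.range m',
      (X 1 : MvPolynomial (Fin 2) (ZMod p)) ^ ((p ^ m' - p ^ (m' - k)) / e)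
        * X 0 ^ p ^ (m' - k - 1) := ⟨_, rfl⟩
  have hu : ∀ k : ℕ, e * ((p ^ (m' + 1) - p ^ (m' + 1 - k)) / e) = p ^ (m' + 1) - p ^ (m' + 1 - k) := by
    intro k
    exact Nat.mul_div_cancel' (aux_e_dvd (by omega) he (show m' + 1 - k ≤ m' + 1 by omega))
  have hv : ∀ k : ℕ, e * ((p ^ m' - p ^ (m' - k)) / e) = p ^ m' - p ^ (m' - k) := by
    intro k
    exact Nat.mul_div_cancel' (aux_e_dvd (by omega) he (show m' - k ≤ m' by omega))
  have hh1g : h1 = X 1 * g := by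
    rw [hh1def, hgdef, Finset.mul_sum]
    refine Finset.sum_congr rfl fun k _ => ?_
    rw [pow_add, pow_one]
    ring
  have hgs : g = X 0 ^ q + X 1 ^ c * s := by
    rw [hgdef, Finset.sum_range_succ']
    have hfirst : (X 1 : MvPolynomial (Fin 2) (ZMod p)) ^ ((p ^ (m' + 1) - p ^ (m' + 1 - 0)) / e)
        * X 0 ^ p ^ (m' + 1 - 0 - 1) = X 0 ^ q := by
      simp [hqdef]
    rw [hfirst, hsdef, Finset.mul_sum, add_comm]
    congr 1
    refine Finset.sum_congr rfl fun k hk => ?_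
    have hk' : k < m' := Finset.mem_range.mp hk
    have hxexp : m' + 1 - (k + 1) - 1 = m' - k - 1 := by omega
    have hxexp2 : m' + 1 - (k + 1) = m' - k := by omega
    have hyexp : (p ^ (m' + 1) - p ^ (m' + 1 - (k + 1))) / e = c + (p ^ m' - p ^ (m' - k)) / e := by
      refine Nat.eq_of_mul_eq_mul_left he0 ?_
      rw [mul_add, hec, hv k, hu (k + 1), hxexp2]
      have hle1 : p ^ (m' - k) ≤ p ^ m' := Nat.pow_le_pow_right (by omega) (by omega)
      have hle2 : p ^ m' ≤ p ^ (m' + 1) := Nat.pow_le_pow_right (by omega) (by omega)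
      omega
    rw [hxexp, hyexp, pow_add]
    ring
  -- the two syzygy coefficients and the key identity
  obtain ⟨A, hAdef⟩ : ∃ A : MvPolynomial (Fin 2) (ZMod p),
      A = (X 1 : MvPolynomial (Fin 2) (ZMod p)) ^ (2 * c - N) * s ^ 2 := ⟨_, rfl⟩
  obtain ⟨B, hBdef⟩ : ∃ B : MvPolynomial (Fin 2) (ZMod p),
      B = (X 0 : MvPolynomial (Fin 2) (ZMod p)) ^ q - X 1 ^ c * s := ⟨_, rfl⟩
  have key : A * X 1 ^ N + B * g = X 0 ^ (2 * q) := by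
    have hA' : A * X 1 ^ N = (X 1 ^ c * s) ^ 2 := by
      rw [hAdef]
      have h1' : (2 * c - N) + N = 2 * c := by omega
      calc (X 1 : MvPolynomial (Fin 2) (ZMod p)) ^ (2 * c - N) * s ^ 2 * X 1 ^ N
          = X 1 ^ ((2 * c - N) + N) * s ^ 2 := by rw [pow_add]; ring
        _ = X 1 ^ (2 * c) * s ^ 2 := by rw [h1']
        _ = (X 1 ^ c * s) ^ 2 := by rw [mul_pow, ← pow_mul, mul_comm c 2]
    calc A * X 1 ^ N + B * g
        = (X 1 ^ c * s) ^ 2 + (X 0 ^ q - X 1 ^ c * s) * (X 0 ^ q + X 1 ^ c * s) := by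
          rw [hA', hBdef, hgs]
      _ = (X 0 ^ q) ^ 2 := by ring
      _ = X 0 ^ (2 * q) := by rw [← pow_mul, mul_comm q 2]
  -- primality of X 1 and non-divisibilities
  have hyprime : Prime (X 1 : MvPolynomial (Fin 2) (ZMod p)) := by
    rw [← MulEquiv.prime_iff (((renameEquiv (ZMod p) (Equiv.swap (0 : Fin 2) 1)).trans
      (finSuccEquiv (ZMod p) 1)).toMulEquiv)]
    have hval : (((renameEquiv (ZMod p) (Equiv.swap (0 : Fin 2) 1)).trans
        (finSuccEquiv (ZMod p) 1)).toMulEquiv) (X 1) = Polynomial.X := by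
      show ((renameEquiv (ZMod p) (Equiv.swap (0 : Fin 2) 1)).trans
        (finSuccEquiv (ZMod p) 1)) (X 1) = Polynomial.X
      rw [AlgEquiv.trans_apply, renameEquiv_apply, rename_X, Equiv.swap_apply_right]
      exact finSuccEquiv_X_zero
    rw [hval]
    exact Polynomial.prime_X
  have hyx : ¬ (X 1 : MvPolynomial (Fin 2) (ZMod p)) ∣ X 0 := by
    intro h
    have := MvPolynomial.X_dvd_X.mp h
    exact absurd this (by decide)
  have hyxn : ∀ n : ℕ, ¬ (X 1 : MvPolynomial (Fin 2) (ZMod p)) ∣ X 0 ^ n := fun n h =>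
    hyx (hyprime.dvd_of_dvd_pow h)
  have hyg : ¬ (X 1 : MvPolynomial (Fin 2) (ZMod p)) ∣ g := by
    intro hdvd
    have hdvd2 : (X 1 : MvPolynomial (Fin 2) (ZMod p)) ∣ X 1 ^ c * s :=
      Dvd.dvd.mul_right (dvd_pow_self (X 1) (by omega)) s
    have h3 : (X 1 : MvPolynomial (Fin 2) (ZMod p)) ∣ X 0 ^ q := by
      have := dvd_sub hdvd hdvd2
      rw [hgs] at this
      simpa using this
    exact hyxn q h3
  have hy0 : (X 1 : MvPolynomial (Fin 2) (ZMod p)) ≠ 0 := hyprime.ne_zero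
  have hh0y : h0 = X 1 * X 1 ^ N := by
    rw [hh0def, pow_add, pow_one, hNdef, hQdef]
  have hh2y : h2 = X 0 ^ (2 * q) := by rw [hh2def, hqdef]; norm_num
  -- evaluation of the linear combination map
  have happ : ∀ f : Fin 3 → MvPolynomial (Fin 2) (ZMod p),
      Fintype.linearCombination (MvPolynomial (Fin 2) (ZMod p)) ![h0, h1, h2] f = f 0 * h0 + f 1 * h1 + f 2 * h2 := by
    intro f
    simp [Fintype.linearCombination_apply, Fin.sum_univ_three]
  constructor
  · -- range = span
    rw [Fintype.range_linearCombination]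
    have : Set.range ![h0, h1, h2] = {h0, h1, h2} := by
      ext w
      simp only [Matrix.range_cons, Matrix.range_empty, Set.union_empty, Set.union_singleton,
        Set.mem_insert_iff, Set.mem_singleton_iff, Set.mem_union]
      tauto
    rw [this]
  · -- the basis
    set K := LinearMap.ker (Fintype.linearCombination (MvPolynomial (Fin 2) (ZMod p))
      ![h0, h1, h2]) with hKdef
    clear_value K
    have mem12 : ![A, B, -(X 1 : MvPolynomial (Fin 2) (ZMod p))] ∈ K := by
      rw [hKdef, LinearMap.mem_ker, happ]
      simp only [Matrix.cons_val_zero, Matrix.cons_val_one, Matrix.head_cons,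
        Matrix.cons_val_two, Matrix.tail_cons]
      rw [hh0y, hh1g, hh2y]
      linear_combination (X 1 : MvPolynomial (Fin 2) (ZMod p)) * key
    have mem01 : ![g, -((X 1 : MvPolynomial (Fin 2) (ZMod p)) ^ N), 0] ∈ K := by
      rw [hKdef, LinearMap.mem_ker, happ]
      simp only [Matrix.cons_val_zero, Matrix.cons_val_one, Matrix.head_cons,
        Matrix.cons_val_two, Matrix.tail_cons]
      rw [hh0y, hh1g]
      ring
    set V : Fin 2 → K := ![⟨![A, B, -(X 1 : MvPolynomial (Fin 2) (ZMod p))], mem12⟩,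
      ⟨![g, -((X 1 : MvPolynomial (Fin 2) (ZMod p)) ^ N), 0], mem01⟩] with hVdef
    have hli : LinearIndependent (MvPolynomial (Fin 2) (ZMod p)) V := by
      rw [Fintype.linearIndependent_iff]
      intro cf hsum
      rw [Fin.sum_univ_two] at hsum
      have hval : cf 0 • (![A, B, -(X 1 : MvPolynomial (Fin 2) (ZMod p))] :
            Fin 3 → MvPolynomial (Fin 2) (ZMod p))
          + cf 1 • ![g, -((X 1 : MvPolynomial (Fin 2) (ZMod p)) ^ N), 0] = 0 :=
        congrArg Subtype.val hsum
      have h2' : cf 0 * (-(X 1 : MvPolynomial (Fin 2) (ZMod p)))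
          + cf 1 * (0 : MvPolynomial (Fin 2) (ZMod p)) = 0 := congrFun hval 2
      have h1' : cf 0 * B + cf 1 * (-((X 1 : MvPolynomial (Fin 2) (ZMod p)) ^ N)) = 0 :=
        congrFun hval 1
      have hcf0 : cf 0 = 0 := by
        have hX : cf 0 * (X 1 : MvPolynomial (Fin 2) (ZMod p)) = 0 := by
          linear_combination (-1 : MvPolynomial (Fin 2) (ZMod p)) * h2'
        rcases mul_eq_zero.mp hX with h | h
        · exact h
        · exact absurd h hy0
      have hcf1 : cf 1 = 0 := by
        have hXN : cf 1 * (X 1 : MvPolynomial (Fin 2) (ZMod p)) ^ N = 0 := by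
          linear_combination (-1 : MvPolynomial (Fin 2) (ZMod p)) * h1' + B * hcf0
        rcases mul_eq_zero.mp hXN with h | h
        · exact h
        · exact absurd h (pow_ne_zero N hy0)
      intro i
      fin_cases i
      · exact hcf0
      · exact hcf1
    have hspan : ⊤ ≤ Submodule.span (MvPolynomial (Fin 2) (ZMod p)) (Set.range V) := by
      rintro w -
      have hw : w.1 0 * h0 + w.1 1 * h1 + w.1 2 * h2 = 0 := by
        have hmem : w.1 ∈ LinearMap.ker (Fintype.linearCombination (MvPolynomial (Fin 2) (ZMod p))
            ![h0, h1, h2]) := hKdef ▸ w.2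
        have h := LinearMap.mem_ker.mp hmem
        rw [happ] at h
        exact h
      rw [hh0y, hh1g, hh2y] at hw
      have hdvdw2 : (X 1 : MvPolynomial (Fin 2) (ZMod p)) ∣ w.1 2 := by
        have h5 : (X 1 : MvPolynomial (Fin 2) (ZMod p)) ∣ w.1 2 * X 0 ^ (2 * q) := by
          refine ⟨-(w.1 0 * X 1 ^ N + w.1 1 * g), ?_⟩
          linear_combination hw
        rcases hyprime.dvd_or_dvd h5 with h | h
        · exact h
        · exact absurd h (hyxn _)
      obtain ⟨c2, hc2⟩ := hdvdw2
      have E1 : w.1 0 * X 1 ^ N + w.1 1 * g + c2 * X 0 ^ (2 * q) = 0 := by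
        have h6 : (X 1 : MvPolynomial (Fin 2) (ZMod p)) *
            (w.1 0 * X 1 ^ N + w.1 1 * g + c2 * X 0 ^ (2 * q)) = 0 := by
          linear_combination hw - X 0 ^ (2 * q) * hc2
        exact (mul_eq_zero.mp h6).resolve_left hy0
      have E2 : (X 1 : MvPolynomial (Fin 2) (ZMod p)) ^ N ∣ (w.1 1 + c2 * B) * g := by
        refine ⟨-(w.1 0 + c2 * A), ?_⟩
        linear_combination E1 + c2 * key
      obtain ⟨t, ht⟩ := hyprime.pow_dvd_of_dvd_mul_right N hyg E2
      have E4 : w.1 0 + c2 * A + t * g = 0 := by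
        have h7 : (X 1 : MvPolynomial (Fin 2) (ZMod p)) ^ N *
            (w.1 0 + c2 * A + t * g) = 0 := by
          linear_combination E1 + c2 * key - g * ht
        exact (mul_eq_zero.mp h7).resolve_left (pow_ne_zero N hy0)
      have hweq : w = (-c2) • V 0 + (-t) • V 1 := by
        apply Subtype.ext
        have hval2 : ((-c2) • V 0 + (-t) • V 1).1
            = (-c2) • (![A, B, -(X 1 : MvPolynomial (Fin 2) (ZMod p))] :
                Fin 3 → MvPolynomial (Fin 2) (ZMod p))
              + (-t) • ![g, -((X 1 : MvPolynomial (Fin 2) (ZMod p)) ^ N), 0] := rfl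
        rw [hval2]
        funext i
        fin_cases i
        · show w.1 0 = _
          simp
          linear_combination E4
        · show w.1 1 = _
          simp
          linear_combination ht
        · show w.1 2 = _
          simp
          linear_combination hc2
      rw [hweq]
      exact Submodule.add_mem _
        (Submodule.smul_mem _ _ (Submodule.subset_span ⟨0, rfl⟩))
        (Submodule.smul_mem _ _ (Submodule.subset_span ⟨1, rfl⟩))
    clear_value V
    -- homogeneity lemmas
    have hwX0 : IsWeightedHomogeneous ![p, e] (X 0 : MvPolynomial (Fin 2) (ZMod p)) p := by
      simpa using isWeightedHomogeneous_X (ZMod p) ![p, e] 0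
    have hwX1 : IsWeightedHomogeneous ![p, e] (X 1 : MvPolynomial (Fin 2) (ZMod p)) e := by
      simpa using isWeightedHomogeneous_X (ZMod p) ![p, e] 1
    have hpow : ∀ (φ : MvPolynomial (Fin 2) (ZMod p)) (n d : ℕ),
        IsWeightedHomogeneous ![p, e] φ d → IsWeightedHomogeneous ![p, e] (φ ^ n) (n * d) := by
      intro φ n d h
      induction n with
      | zero => simpa using isWeightedHomogeneous_one (ZMod p) ![p, e]
      | succ n ih =>
        rw [pow_succ, Nat.succ_mul]
        exact ih.mul h
    have hneg : ∀ (φ : MvPolynomial (Fin 2) (ZMod p)) (d : ℕ),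
        IsWeightedHomogeneous ![p, e] φ d → IsWeightedHomogeneous ![p, e] (-φ) d := by
      intro φ d h
      rw [← mem_weightedHomogeneousSubmodule] at h ⊢
      exact neg_mem h
    have hsub : ∀ (φ ψ : MvPolynomial (Fin 2) (ZMod p)) (d : ℕ),
        IsWeightedHomogeneous ![p, e] φ d → IsWeightedHomogeneous ![p, e] ψ d →
          IsWeightedHomogeneous ![p, e] (φ - ψ) d := by
      intro φ ψ d ha hb
      rw [← mem_weightedHomogeneousSubmodule] at ha hb ⊢
      exact sub_mem ha hb
    have homs : IsWeightedHomogeneous ![p, e] s q := by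
      rw [hsdef]
      apply IsWeightedHomogeneous.sum
      intro k hk
      have hk' : k < m' := Finset.mem_range.mp hk
      have hterm := (hpow (X 1) ((p ^ m' - p ^ (m' - k)) / e) e hwX1).mul
        (hpow (X 0) (p ^ (m' - k - 1)) p hwX0)
      have hdeg : (p ^ m' - p ^ (m' - k)) / e * e + p ^ (m' - k - 1) * p = q := by
        have h1' : p ^ (m' - k - 1) * p = p ^ (m' - k) := by
          rw [← pow_succ]
          congr 1
          omega
        have h2' : p ^ (m' - k) ≤ p ^ m' := Nat.pow_le_pow_right (by omega) (by omega)
        have h3' := hv k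
        have h4' : (p ^ m' - p ^ (m' - k)) / e * e = e * ((p ^ m' - p ^ (m' - k)) / e) := by ring
        omega
      rwa [hdeg] at hterm
    have homg : IsWeightedHomogeneous ![p, e] g Q := by
      rw [hgdef]
      apply IsWeightedHomogeneous.sum
      intro k hk
      have hk' : k < m' + 1 := Finset.mem_range.mp hk
      have hterm := (hpow (X 1) ((p ^ (m' + 1) - p ^ (m' + 1 - k)) / e) e hwX1).mul
        (hpow (X 0) (p ^ (m' + 1 - k - 1)) p hwX0)
      have hdeg : (p ^ (m' + 1) - p ^ (m' + 1 - k)) / e * e + p ^ (m' + 1 - k - 1) * p = Q := by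
        have h1' : p ^ (m' + 1 - k - 1) * p = p ^ (m' + 1 - k) := by
          rw [← pow_succ]
          congr 1
          omega
        have h2' : p ^ (m' + 1 - k) ≤ p ^ (m' + 1) := Nat.pow_le_pow_right (by omega) (by omega)
        have h3' := hu k
        have h4' : (p ^ (m' + 1) - p ^ (m' + 1 - k)) / e * e
            = e * ((p ^ (m' + 1) - p ^ (m' + 1 - k)) / e) := by ring
        omega
      rwa [hdeg] at hterm
    have homA : IsWeightedHomogeneous ![p, e] A (Q + 1) := by
      rw [hAdef]
      have hterm := (hpow (X 1) (2 * c - N) e hwX1).mul (hpow s 2 q homs)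
      have hdeg : (2 * c - N) * e + 2 * q = Q + 1 := by
        have h1' : (2 * c - N) * e = 2 * c * e - N * e := Nat.sub_mul _ _ _
        have h2' : 2 * c * e = 2 * (e * c) := by ring
        have h3' : N * e = e * N := by ring
        omega
      rwa [hdeg] at hterm
    have homB : IsWeightedHomogeneous ![p, e] B Q := by
      rw [hBdef]
      refine hsub _ _ _ ?_ ?_
      · have h := hpow (X 0) q p hwX0
        rwa [show q * p = Q from hQq.symm] at h
      · have hterm := (hpow (X 1) c e hwX1).mul homs
        have hdeg : c * e + q = Q := by
          have h2' : c * e = e * c := by ring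
          omega
        rwa [hdeg] at hterm
    have homyN : IsWeightedHomogeneous ![p, e]
        ((X 1 : MvPolynomial (Fin 2) (ZMod p)) ^ N) (Q - 1) := by
      have h := hpow (X 1) N e hwX1
      have hdeg : N * e = Q - 1 := by
        have h3' : N * e = e * N := by ring
        omega
      rwa [hdeg] at h
    refine ⟨Module.Basis.mk hli hspan, ?_⟩
    intro j i
    rw [Module.Basis.mk_apply, hVdef]
    fin_cases j <;> fin_cases i
    · show IsWeightedHomogeneous ![p, e] A (2 * p ^ (m' + 1) + e - (p ^ (m' + 1) + e - 1))
      exact (show Q + 1 = 2 * p ^ (m' + 1) + e - (p ^ (m' + 1) + e - 1) by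
        rw [hQdef] at *; omega) ▸ homA
    · show IsWeightedHomogeneous ![p, e] B (2 * p ^ (m' + 1) + e - (p ^ (m' + 1) + e))
      exact (show Q = 2 * p ^ (m' + 1) + e - (p ^ (m' + 1) + e) by
        rw [hQdef] at *; omega) ▸ homB
    · show IsWeightedHomogeneous ![p, e] (-(X 1 : MvPolynomial (Fin 2) (ZMod p)))
        (2 * p ^ (m' + 1) + e - 2 * p ^ (m' + 1))
      exact (show e = 2 * p ^ (m' + 1) + e - 2 * p ^ (m' + 1) by omega) ▸ hneg _ _ hwX1
    · show IsWeightedHomogeneous ![p, e] g (2 * p ^ (m' + 1) + e - 1 - (p ^ (m' + 1) + e - 1))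
      exact (show Q = 2 * p ^ (m' + 1) + e - 1 - (p ^ (m' + 1) + e - 1) by
        rw [hQdef] at *
        have : 1 ≤ p ^ (m' + 1) := Nat.one_le_pow _ _ (by omega)
        omega) ▸ homg
    · show IsWeightedHomogeneous ![p, e] (-((X 1 : MvPolynomial (Fin 2) (ZMod p)) ^ N))
        (2 * p ^ (m' + 1) + e - 1 - (p ^ (m' + 1) + e))
      exact (show Q - 1 = 2 * p ^ (m' + 1) + e - 1 - (p ^ (m' + 1) + e) by
        rw [hQdef] at *
        have : 1 ≤ p ^ (m' + 1) := Nat.one_le_pow _ _ (by omega)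
        omega) ▸ hneg _ _ homyN
    · exact isWeightedHomogeneous_zero _ _ _
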